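/- arXiv:1503.01761 — 4 statements merged into one kernel-verified Lean document; each statement's English description precedes it below -/
import Mathlib

section
/- Let f be holomorphic on the open unit disk 𝔻, let u : 𝔻 → ℂ be continuously differentiable, and let 0 < r < 1. Then (1/2π) ∫₀^{2π} f(r e^{it}) u(r e^{it}) dt = (1/(π r²)) ∬_{{(x,y) : x²+y² < r²}} f(x+iy) ∂_{z̄}( u(z) z̄ )(x,y) dx dy, where z = x+iy, z̄ = x−iy and ∂_{z̄} = (1/2)(∂/∂x + i ∂/∂y). -/
open Complex MeasureTheory Metric

noncomputable def Wd (F : ℂ → ℂ) (z : ℂ) : ℂ :=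
  (1 / 2) * (fderiv ℝ F z 1 + Complex.I * fderiv ℝ F z Complex.I)

-- derivative of t ↦ exp(t I)
lemma hasDerivAt_expI (t : ℝ) :
    HasDerivAt (fun s : ℝ => Complex.exp (s * Complex.I)) (Complex.I * Complex.exp (t * Complex.I)) t := by
  have h1 : HasDerivAt (fun s : ℝ => (s : ℂ) * Complex.I) Complex.I t := by
    simpa using (Complex.ofRealCLM.hasDerivAt (x := t)).mul_const Complex.I
  have h2 := ((Complex.hasDerivAt_exp ((t : ℂ) * Complex.I)).hasFDerivAt.restrictScalars ℝ)
  have := h2.comp_hasDerivAt t h1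
  simpa [mul_comm, Function.comp_def] using this

-- radial derivative
lemma hasDerivAt_radial (F : ℂ → ℂ) (t ρ : ℝ) (hd : DifferentiableAt ℝ F ((ρ : ℂ) * Complex.exp (t * Complex.I))) :
    HasDerivAt (fun s : ℝ => F ((s : ℂ) * Complex.exp (t * Complex.I)) * ((s : ℂ) * Complex.exp (t * Complex.I)))
      ((fderiv ℝ F ((ρ : ℂ) * Complex.exp (t * Complex.I))) (Complex.exp (t * Complex.I)) * ((ρ : ℂ) * Complex.exp (t * Complex.I))
        + F ((ρ : ℂ) * Complex.exp (t * Complex.I)) * Complex.exp (t * Complex.I)) ρ := by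
  have h1 : HasDerivAt (fun s : ℝ => (s : ℂ) * Complex.exp (t * Complex.I)) (Complex.exp (t * Complex.I)) ρ := by
    simpa using (Complex.ofRealCLM.hasDerivAt (x := ρ)).mul_const (Complex.exp (t * Complex.I))
  exact (hd.hasFDerivAt.comp_hasDerivAt ρ h1).mul h1

-- angular derivative
lemma hasDerivAt_angular (F : ℂ → ℂ) (ρ t : ℝ) (hd : DifferentiableAt ℝ F ((ρ : ℂ) * Complex.exp (t * Complex.I))) :
    HasDerivAt (fun s : ℝ => F ((ρ : ℂ) * Complex.exp (s * Complex.I)) * Complex.exp (s * Complex.I))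
      ((fderiv ℝ F ((ρ : ℂ) * Complex.exp (t * Complex.I))) ((ρ : ℂ) * (Complex.I * Complex.exp (t * Complex.I))) * Complex.exp (t * Complex.I)
        + F ((ρ : ℂ) * Complex.exp (t * Complex.I)) * (Complex.I * Complex.exp (t * Complex.I))) t := by
  have h1 : HasDerivAt (fun s : ℝ => (ρ : ℂ) * Complex.exp (s * Complex.I)) ((ρ : ℂ) * (Complex.I * Complex.exp (t * Complex.I))) t :=
    (hasDerivAt_expI t).const_mul _
  exact (hd.hasFDerivAt.comp_hasDerivAt t h1).mul (hasDerivAt_expI t)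

-- algebraic identity
lemma key_alg (L : ℂ →L[ℝ] ℂ) (w : ℂ) (ρ t : ℝ) :
    L (Complex.exp (t * Complex.I)) * ((ρ : ℂ) * Complex.exp (t * Complex.I))
        + w * Complex.exp (t * Complex.I)
      = -Complex.I * (L ((ρ : ℂ) * (Complex.I * Complex.exp (t * Complex.I))) * Complex.exp (t * Complex.I)
          + w * (Complex.I * Complex.exp (t * Complex.I)))
        + (ρ : ℂ) * (L 1 + Complex.I * L Complex.I) := by
  have hL : ∀ v : ℂ, L v = (v.re : ℂ) * L 1 + (v.im : ℂ) * L Complex.I := by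
    intro v
    have : v = v.re • (1 : ℂ) + v.im • Complex.I := by
      simp [Complex.real_smul, Complex.re_add_im]
    conv_lhs => rw [this]
    rw [map_add, L.map_smul, L.map_smul]
    simp [Complex.real_smul]
  have key : Complex.cos t ^ 2 + Complex.sin t ^ 2 = 1 := Complex.cos_sq_add_sin_sq t
  have he : Complex.exp (t * Complex.I) = (Real.cos t : ℂ) + (Real.sin t : ℂ) * Complex.I := by
    rw [Complex.exp_mul_I]
    norm_cast
  rw [hL (Complex.exp (t * Complex.I)), hL ((ρ : ℂ) * (Complex.I * Complex.exp (t * Complex.I)))]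
  simp only [he]
  simp only [Complex.add_re, Complex.add_im, Complex.mul_re, Complex.mul_im, Complex.I_re,
    Complex.I_im, Complex.ofReal_re, Complex.ofReal_im]
  push_cast
  linear_combination ((ρ : ℂ) * (L 1 + Complex.I * L Complex.I)) * key +
    (Complex.cos t * Complex.sin t * L Complex.I * (ρ : ℂ) + Complex.cos t * w
      + Complex.sin t * Complex.I * w - Complex.sin t ^ 2 * L 1 * (ρ : ℂ)) * Complex.I_sq

lemma periodic_exp_ofReal : Function.Periodic (fun t : ℝ => Complex.exp (t * Complex.I)) (2 * Real.pi) := by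
  intro t
  simp only []
  push_cast
  rw [add_mul, Complex.exp_add, Complex.exp_two_pi_mul_I, mul_one]

lemma polar_ball (W : ℂ → ℂ) (hW : ContinuousOn W (ball (0:ℂ) 1)) (r : ℝ) (hr0 : 0 < r) (hr1 : r < 1) :
    ∫ z in ball (0:ℂ) r, W z
      = ∫ ρ in (0:ℝ)..r, ∫ t in (0:ℝ)..(2*Real.pi), (ρ:ℂ) * W ((ρ:ℂ) * Complex.exp (t * Complex.I)) ∂volume ∂volume := by
  have h1 := Complex.integral_comp_polarCoord_symm ((ball (0:ℂ) r).indicator W)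
  rw [integral_indicator measurableSet_ball] at h1
  rw [← h1]
  set g : ℝ × ℝ → ℂ := fun p => (p.1 : ℂ) * W ((p.1 : ℂ) * Complex.exp (p.2 * Complex.I)) with hg
  have hsymm : ∀ p : ℝ × ℝ, Complex.polarCoord.symm p = (p.1 : ℂ) * Complex.exp (p.2 * Complex.I) := by
    intro p
    rw [Complex.polarCoord_symm_apply, Complex.exp_mul_I]
    norm_cast
  have habs : ∀ x y : ℝ, ‖(x : ℂ) * Complex.exp (y * Complex.I)‖ = |x| := by
    intro x y
    rw [norm_mul, Complex.norm_exp_ofReal_mul_I, mul_one, Complex.norm_real, Real.norm_eq_abs]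
  set U : Set (ℝ × ℝ) := Set.Ioo (0:ℝ) r ×ˢ Set.Ioo (-Real.pi) Real.pi with hU
  have hUsub : U ⊆ polarCoord.target := by
    rintro ⟨ρ, θ⟩ ⟨h1', h2'⟩
    exact ⟨Set.mem_Ioi.2 h1'.1, h2'⟩
  have heq : Set.EqOn (fun p : ℝ × ℝ => p.1 • (ball (0:ℂ) r).indicator W (Complex.polarCoord.symm p))
      (U.indicator g) polarCoord.target := by
    rintro ⟨ρ, θ⟩ hp
    obtain ⟨hρ, hθ⟩ := hp
    simp only [Set.mem_Ioi] at hρ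
    show ρ • (ball (0:ℂ) r).indicator W (Complex.polarCoord.symm (ρ, θ)) = U.indicator g (ρ, θ)
    by_cases h : ρ < r
    · have hmem : Complex.polarCoord.symm (ρ, θ) ∈ ball (0:ℂ) r := by
        rw [mem_ball_zero_iff, hsymm]
        simpa [habs, abs_of_pos hρ] using h
      have hU' : (ρ, θ) ∈ U := ⟨⟨hρ, h⟩, hθ⟩
      rw [Set.indicator_of_mem hmem, Set.indicator_of_mem hU', hsymm]
      show ρ • W ((ρ:ℂ) * Complex.exp (θ * Complex.I)) = (ρ:ℂ) * W ((ρ:ℂ) * Complex.exp (θ * Complex.I))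
      rw [Complex.real_smul]
    · have hmem : Complex.polarCoord.symm (ρ, θ) ∉ ball (0:ℂ) r := by
        rw [mem_ball_zero_iff, hsymm]
        simp only [habs, abs_of_pos hρ]
        exact h
      have hU' : (ρ, θ) ∉ U := by
        rintro ⟨⟨_, h2'⟩, _⟩
        exact h h2'
      rw [Set.indicator_of_notMem hmem, Set.indicator_of_notMem hU', smul_zero]
  rw [setIntegral_congr_fun polarCoord.open_target.measurableSet heq,
    setIntegral_indicator (by measurability : MeasurableSet U),
    Set.inter_eq_self_of_subset_right hUsub]
  have hvol : (volume : Measure (ℝ × ℝ)) = (volume : Measure ℝ).prod volume :=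
    MeasureTheory.Measure.volume_eq_prod ℝ ℝ
  have hgint : IntegrableOn g U := by
    have hK : IsCompact (Set.Icc (0:ℝ) r ×ˢ Set.Icc (-Real.pi) Real.pi) :=
      isCompact_Icc.prod isCompact_Icc
    have hmapsto : Set.MapsTo (fun p : ℝ × ℝ => (p.1 : ℂ) * Complex.exp (p.2 * Complex.I))
        (Set.Icc (0:ℝ) r ×ˢ Set.Icc (-Real.pi) Real.pi) (ball (0:ℂ) 1) := by
      rintro ⟨ρ, θ⟩ ⟨h1', _⟩
      rw [mem_ball_zero_iff, habs]
      calc |ρ| ≤ r := abs_le.2 ⟨by linarith [h1'.1], h1'.2⟩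
        _ < 1 := hr1
    have hcont : ContinuousOn g (Set.Icc (0:ℝ) r ×ˢ Set.Icc (-Real.pi) Real.pi) := by
      apply ContinuousOn.mul
      · exact (Complex.continuous_ofReal.comp continuous_fst).continuousOn
      · exact hW.comp (by fun_prop) hmapsto
    exact (hcont.integrableOn_compact hK).mono_set
      (Set.prod_mono Set.Ioo_subset_Icc_self Set.Ioo_subset_Icc_self)
  rw [hU]
  rw [show (∫ x in Set.Ioo (0:ℝ) r ×ˢ Set.Ioo (-Real.pi) Real.pi, g x ∂volume)
      = ∫ x in Set.Ioo (0:ℝ) r ×ˢ Set.Ioo (-Real.pi) Real.pi, g x ∂((volume : Measure ℝ).prod volume) from by rw [← hvol]]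
  rw [setIntegral_prod g (by rwa [← hvol])]
  rw [intervalIntegral.integral_of_le hr0.le, ← MeasureTheory.integral_Ioc_eq_integral_Ioo]
  apply setIntegral_congr_fun measurableSet_Ioc
  intro ρ hρ
  have hper : Function.Periodic (fun t : ℝ => (ρ:ℂ) * W ((ρ:ℂ) * Complex.exp (t * Complex.I))) (2 * Real.pi) := by
    intro t
    show (ρ:ℂ) * W ((ρ:ℂ) * Complex.exp ((t + 2*Real.pi : ℝ) * Complex.I)) = _
    rw [show Complex.exp (((t + 2*Real.pi : ℝ) : ℂ) * Complex.I) = Complex.exp ((t:ℂ) * Complex.I) from periodic_exp_ofReal t]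
  have hshift := hper.intervalIntegral_add_eq (-Real.pi) 0
  simp only [zero_add] at hshift
  have hpi : -Real.pi + 2 * Real.pi = Real.pi := by ring
  rw [hpi] at hshift
  show (∫ y in Set.Ioo (-Real.pi) Real.pi, (ρ:ℂ) * W ((ρ:ℂ) * Complex.exp (y * Complex.I))) = _
  rw [← MeasureTheory.integral_Ioc_eq_integral_Ioo,
    ← intervalIntegral.integral_of_le (by linarith [Real.pi_pos] : -Real.pi ≤ Real.pi), hshift]

lemma stokes_disk (F : ℂ → ℂ) (hF : ContDiffOn ℝ 1 F (ball (0:ℂ) 1))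
    (r : ℝ) (hr0 : 0 < r) (hr1 : r < 1) :
    ∫ t in (0:ℝ)..(2*Real.pi), F ((r:ℂ) * Complex.exp (t * Complex.I)) * ((r:ℂ) * Complex.exp (t * Complex.I))
      = 2 * ∫ z in ball (0:ℂ) r, Wd F z := by
  have hpi := Real.pi_pos
  have hmem : ∀ ρ t : ℝ, |ρ| ≤ r → (ρ:ℂ) * Complex.exp (t * Complex.I) ∈ ball (0:ℂ) 1 := by
    intro ρ t hρ
    rw [mem_ball_zero_iff, norm_mul, Complex.norm_exp_ofReal_mul_I, mul_one,
      Complex.norm_real, Real.norm_eq_abs]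
    linarith
  have hdiff : ∀ z ∈ ball (0:ℂ) 1, DifferentiableAt ℝ F z := fun z hz =>
    ((hF.differentiableOn one_ne_zero).differentiableAt (isOpen_ball.mem_nhds hz))
  have hfd : ContinuousOn (fderiv ℝ F) (ball (0:ℂ) 1) :=
    hF.continuousOn_fderiv_of_isOpen isOpen_ball le_rfl
  have hFc : ContinuousOn F (ball (0:ℂ) 1) := hF.continuousOn
  -- continuity of basic maps
  have hc : Continuous (fun p : ℝ × ℝ => (p.1 : ℂ) * Complex.exp (p.2 * Complex.I)) := by fun_prop
  set K : Set (ℝ × ℝ) := Set.uIcc (0:ℝ) r ×ˢ Set.uIcc (0:ℝ) (2*Real.pi) with hK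
  have hKmaps : Set.MapsTo (fun p : ℝ × ℝ => (p.1 : ℂ) * Complex.exp (p.2 * Complex.I)) K (ball (0:ℂ) 1) := by
    rintro ⟨ρ, t⟩ ⟨h1, _⟩
    apply hmem
    rw [Set.uIcc_of_le hr0.le] at h1
    rw [abs_le]
    exact ⟨by linarith [h1.1], h1.2⟩
  have hLK : ContinuousOn (fun p : ℝ × ℝ => fderiv ℝ F ((p.1 : ℂ) * Complex.exp (p.2 * Complex.I))) K :=
    hfd.comp hc.continuousOn hKmaps
  have hFK : ContinuousOn (fun p : ℝ × ℝ => F ((p.1 : ℂ) * Complex.exp (p.2 * Complex.I))) K :=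
    hFc.comp hc.continuousOn hKmaps
  -- the three integrands
  set A : ℝ × ℝ → ℂ := fun p =>
    (fderiv ℝ F ((p.1 : ℂ) * Complex.exp (p.2 * Complex.I))) (Complex.exp (p.2 * Complex.I))
        * ((p.1 : ℂ) * Complex.exp (p.2 * Complex.I))
      + F ((p.1 : ℂ) * Complex.exp (p.2 * Complex.I)) * Complex.exp (p.2 * Complex.I) with hA
  set B : ℝ × ℝ → ℂ := fun p =>
    (fderiv ℝ F ((p.1 : ℂ) * Complex.exp (p.2 * Complex.I))) ((p.1 : ℂ) * (Complex.I * Complex.exp (p.2 * Complex.I)))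
        * Complex.exp (p.2 * Complex.I)
      + F ((p.1 : ℂ) * Complex.exp (p.2 * Complex.I)) * (Complex.I * Complex.exp (p.2 * Complex.I)) with hB
  have hAK : ContinuousOn A K := by
    apply ContinuousOn.add
    · exact (hLK.clm_apply (by fun_prop)).mul hc.continuousOn
    · exact hFK.mul (by fun_prop)
  have hBK : ContinuousOn B K := by
    apply ContinuousOn.add
    · exact (hLK.clm_apply (by fun_prop)).mul (by fun_prop)
    · exact hFK.mul (by fun_prop)
  have hWK : ContinuousOn (fun p : ℝ × ℝ => (p.1 : ℂ) * Wd F ((p.1 : ℂ) * Complex.exp (p.2 * Complex.I))) K := by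
    apply ContinuousOn.mul
    · fun_prop
    · unfold Wd
      exact (continuousOn_const.mul ((hLK.clm_apply continuousOn_const).add
        (continuousOn_const.mul (hLK.clm_apply continuousOn_const))))
  have hKcomp : IsCompact K := isCompact_uIcc.prod isCompact_uIcc
  -- FTC in ρ
  have step4 : ∀ t ∈ Set.uIcc (0:ℝ) (2*Real.pi),
      ∫ ρ in (0:ℝ)..r, A (ρ, t) = F ((r:ℂ) * Complex.exp (t * Complex.I)) * ((r:ℂ) * Complex.exp (t * Complex.I)) := by
    intro t ht
    have hderiv : ∀ ρ ∈ Set.uIcc (0:ℝ) r,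
        HasDerivAt (fun s : ℝ => F ((s : ℂ) * Complex.exp (t * Complex.I)) * ((s : ℂ) * Complex.exp (t * Complex.I))) (A (ρ, t)) ρ := by
      intro ρ hρ
      apply hasDerivAt_radial
      apply hdiff
      apply hmem
      rw [Set.uIcc_of_le hr0.le] at hρ
      rw [abs_le]; exact ⟨by linarith [hρ.1], hρ.2⟩
    have hint : IntervalIntegrable (fun ρ => A (ρ, t)) volume 0 r := by
      apply ContinuousOn.intervalIntegrable
      exact hAK.comp (Continuous.continuousOn (by fun_prop)) (fun ρ hρ => ⟨hρ, ht⟩)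
    have := intervalIntegral.integral_eq_sub_of_hasDerivAt hderiv hint
    rw [this]
    norm_num
  -- FTC in t : integral of B over a period is 0
  have step5 : ∀ ρ ∈ Set.uIcc (0:ℝ) r, ∫ t in (0:ℝ)..(2*Real.pi), B (ρ, t) = 0 := by
    intro ρ hρ
    have hρ' : |ρ| ≤ r := by
      rw [Set.uIcc_of_le hr0.le] at hρ
      rw [abs_le]; exact ⟨by linarith [hρ.1], hρ.2⟩
    have hderiv : ∀ t ∈ Set.uIcc (0:ℝ) (2*Real.pi),
        HasDerivAt (fun s : ℝ => F ((ρ : ℂ) * Complex.exp (s * Complex.I)) * Complex.exp (s * Complex.I)) (B (ρ, t)) t := by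
      intro t _
      exact hasDerivAt_angular F ρ t (hdiff _ (hmem ρ t hρ'))
    have hint : IntervalIntegrable (fun t => B (ρ, t)) volume 0 (2*Real.pi) := by
      apply ContinuousOn.intervalIntegrable
      exact hBK.comp (Continuous.continuousOn (by fun_prop)) (fun t ht => ⟨hρ, ht⟩)
    rw [intervalIntegral.integral_eq_sub_of_hasDerivAt hderiv hint]
    have h2pi : Complex.exp (((2*Real.pi : ℝ) : ℂ) * Complex.I) = 1 := by
      push_cast
      exact Complex.exp_two_pi_mul_I
    rw [h2pi]
    norm_num
  -- pointwise identity A = -I * B + 2 ρ W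
  have hptwise : ∀ ρ t : ℝ, |ρ| ≤ r →
      A (ρ, t) = -Complex.I * B (ρ, t) + 2 * ((ρ:ℂ) * Wd F ((ρ:ℂ) * Complex.exp (t * Complex.I))) := by
    intro ρ t hρ
    have := key_alg (fderiv ℝ F ((ρ:ℂ) * Complex.exp (t * Complex.I)))
      (F ((ρ:ℂ) * Complex.exp (t * Complex.I))) ρ t
    simp only [hA, hB]
    rw [this]
    unfold Wd
    ring
  -- slice continuity for the W-term
  have hWslice : ∀ ρ ∈ Set.uIcc (0:ℝ) r,
      IntervalIntegrable (fun t => (ρ:ℂ) * Wd F ((ρ:ℂ) * Complex.exp (t * Complex.I))) volume 0 (2*Real.pi) := by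
    intro ρ hρ
    apply ContinuousOn.intervalIntegrable
    exact hWK.comp ((Continuous.prodMk_right ρ).continuousOn) (fun t ht => ⟨hρ, ht⟩)
  have hBslice : ∀ ρ ∈ Set.uIcc (0:ℝ) r,
      IntervalIntegrable (fun t => B (ρ, t)) volume 0 (2*Real.pi) := by
    intro ρ hρ
    apply ContinuousOn.intervalIntegrable
    exact hBK.comp (Continuous.continuousOn (by fun_prop)) (fun t ht => ⟨hρ, ht⟩)
  -- Fubini swap for A
  have hswap : (∫ t in (0:ℝ)..(2*Real.pi), ∫ ρ in (0:ℝ)..r, A (ρ, t))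
      = ∫ ρ in (0:ℝ)..r, ∫ t in (0:ℝ)..(2*Real.pi), A (ρ, t) := by
    rw [intervalIntegral.integral_of_le (by linarith : (0:ℝ) ≤ 2*Real.pi),
      intervalIntegral.integral_of_le hr0.le]
    simp_rw [intervalIntegral.integral_of_le hr0.le,
      intervalIntegral.integral_of_le (by linarith : (0:ℝ) ≤ 2*Real.pi)]
    apply MeasureTheory.integral_integral_swap
    rw [Measure.prod_restrict, ← Measure.volume_eq_prod]
    have hcont : ContinuousOn (fun q : ℝ × ℝ => A (q.2, q.1))
        (Set.Icc (0:ℝ) (2*Real.pi) ×ˢ Set.Icc (0:ℝ) r) := by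
      apply hAK.comp continuous_swap.continuousOn
      rintro ⟨t, ρ⟩ ⟨ht, hρ⟩
      exact ⟨by rw [Set.uIcc_of_le hr0.le]; exact hρ,
        by rw [Set.uIcc_of_le (by linarith : (0:ℝ) ≤ 2*Real.pi)]; exact ht⟩
    exact (hcont.integrableOn_compact (isCompact_Icc.prod isCompact_Icc)).mono_set
      (Set.prod_mono Set.Ioc_subset_Icc_self Set.Ioc_subset_Icc_self)
  calc ∫ t in (0:ℝ)..(2*Real.pi), F ((r:ℂ) * Complex.exp (t * Complex.I)) * ((r:ℂ) * Complex.exp (t * Complex.I))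
      = ∫ t in (0:ℝ)..(2*Real.pi), ∫ ρ in (0:ℝ)..r, A (ρ, t) := by
        apply intervalIntegral.integral_congr
        intro t ht
        exact (step4 t ht).symm
    _ = ∫ ρ in (0:ℝ)..r, ∫ t in (0:ℝ)..(2*Real.pi), A (ρ, t) := hswap
    _ = ∫ ρ in (0:ℝ)..r, 2 * ∫ t in (0:ℝ)..(2*Real.pi), (ρ:ℂ) * Wd F ((ρ:ℂ) * Complex.exp (t * Complex.I)) := by
        apply intervalIntegral.integral_congr
        intro ρ hρ
        beta_reduce
        have hρ' : |ρ| ≤ r := by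
          rw [Set.uIcc_of_le hr0.le] at hρ
          rw [abs_le]; exact ⟨by linarith [hρ.1], hρ.2⟩
        have h1 : (∫ t in (0:ℝ)..(2*Real.pi), A (ρ, t))
            = ∫ t in (0:ℝ)..(2*Real.pi),
                (-Complex.I * B (ρ, t) + 2 * ((ρ:ℂ) * Wd F ((ρ:ℂ) * Complex.exp (t * Complex.I)))) := by
          apply intervalIntegral.integral_congr
          intro t _
          exact hptwise ρ t hρ'
        rw [h1, intervalIntegral.integral_add ((hBslice ρ hρ).const_mul _)
          ((hWslice ρ hρ).const_mul _), intervalIntegral.integral_const_mul,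
          intervalIntegral.integral_const_mul, step5 ρ hρ]
        ring
    _ = 2 * ∫ ρ in (0:ℝ)..r, ∫ t in (0:ℝ)..(2*Real.pi), (ρ:ℂ) * Wd F ((ρ:ℂ) * Complex.exp (t * Complex.I)) := by
        rw [intervalIntegral.integral_const_mul]
    _ = 2 * ∫ z in ball (0:ℂ) r, Wd F z := by
        rw [polar_ball (Wd F) ?_ r hr0 hr1]
        unfold Wd
        exact continuousOn_const.mul ((hfd.clm_apply continuousOn_const).add
          (continuousOn_const.mul (hfd.clm_apply continuousOn_const)))


/-- Stokes-theorem step: for `f` holomorphic on the open unit disk, `u` continuously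
differentiable on the open unit disk, and `0 < r < 1`,
`(1/2π) ∫₀^{2π} f(re^{it}) u(re^{it}) dt
  = (1/(π r²)) ∬_{|z|<r} f(z) ∂_{z̄}(u(z) z̄) dx dy`,
where `∂_{z̄} = (1/2)(∂/∂x + i ∂/∂y)`. -/
theorem stmt4 (f u : ℂ → ℂ)
    (hf : DifferentiableOn ℂ f (ball (0 : ℂ) 1))
    (hu : ContDiffOn ℝ 1 u (ball (0 : ℂ) 1))
    (r : ℝ) (hr0 : 0 < r) (hr1 : r < 1) :
    (1 / (2 * (Real.pi : ℂ))) *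
        ∫ t in (0:ℝ)..(2 * Real.pi),
          f (r * Complex.exp (t * Complex.I)) * u (r * Complex.exp (t * Complex.I))
      = (1 / ((Real.pi : ℂ) * r ^ 2)) *
          ∫ z in ball (0 : ℂ) r,
            f z * ((1 / 2) *
              (fderiv ℝ (fun w => u w * (starRingEnd ℂ) w) z 1
                + Complex.I * fderiv ℝ (fun w => u w * (starRingEnd ℂ) w) z Complex.I)) := by
  have hpi := Real.pi_pos
  set g : ℂ → ℂ := fun w => u w * (starRingEnd ℂ) w with hg
  set F : ℂ → ℂ := fun w => f w * g w with hFdef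
  have hgC : ContDiffOn ℝ 1 g (ball (0:ℂ) 1) := by
    apply hu.mul
    exact (Complex.conjCLE.contDiff.of_le le_top).contDiffOn
  have hfC : ContDiffOn ℝ 1 f (ball (0:ℂ) 1) := by
    have := (hf.contDiffOn isOpen_ball (n := 1))
    exact this.restrict_scalars ℝ
  have hFC : ContDiffOn ℝ 1 F (ball (0:ℂ) 1) := hfC.mul hgC
  have hW : ∀ z ∈ ball (0:ℂ) 1,
      f z * ((1/2) * (fderiv ℝ g z 1 + Complex.I * fderiv ℝ g z Complex.I)) = Wd F z := by
    intro z hz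
    have hfz : DifferentiableAt ℂ f z := hf.differentiableAt (isOpen_ball.mem_nhds hz)
    have hgz : DifferentiableAt ℝ g z :=
      ((hgC.differentiableOn one_ne_zero).differentiableAt (isOpen_ball.mem_nhds hz))
    have hfzR : DifferentiableAt ℝ f z := hfz.restrictScalars ℝ
    have hmul : fderiv ℝ F z = f z • fderiv ℝ g z + g z • fderiv ℝ f z := fderiv_mul hfzR hgz
    have hCR : fderiv ℝ f z Complex.I = Complex.I * fderiv ℝ f z 1 := by
      rw [hfz.fderiv_restrictScalars ℝ]
      show (fderiv ℂ f z) Complex.I = Complex.I * (fderiv ℂ f z) 1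
      have h2 := (fderiv ℂ f z).map_smul Complex.I (1:ℂ)
      simp only [smul_eq_mul, mul_one] at h2
      exact h2

    unfold Wd
    rw [hmul]
    simp only [ContinuousLinearMap.add_apply, ContinuousLinearMap.smul_apply, smul_eq_mul]
    rw [hCR]
    linear_combination (-(u z * (starRingEnd ℂ) z * (fderiv ℝ f z) 1) * (1/2)) * Complex.I_sq
  have hball : ball (0:ℂ) r ⊆ ball (0:ℂ) 1 := ball_subset_ball hr1.le
  have hRHS : (∫ z in ball (0 : ℂ) r,
      f z * ((1 / 2) * (fderiv ℝ g z 1 + Complex.I * fderiv ℝ g z Complex.I)))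
      = ∫ z in ball (0:ℂ) r, Wd F z := by
    apply setIntegral_congr_fun measurableSet_ball
    intro z hz
    exact hW z (hball hz)
  have hstokes := stokes_disk F hFC r hr0 hr1
  -- LHS rewriting
  have hcc : ∀ t : ℝ, (starRingEnd ℂ) ((r:ℂ) * Complex.exp (t * Complex.I)) * ((r:ℂ) * Complex.exp (t * Complex.I)) = (r:ℂ)^2 := by
    intro t
    rw [map_mul, ← Complex.exp_conj]
    have : (starRingEnd ℂ) ((t:ℂ) * Complex.I) = -((t:ℂ) * Complex.I) := by
      rw [map_mul, Complex.conj_I, Complex.conj_ofReal]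
      ring
    rw [this]
    have : (starRingEnd ℂ) (r:ℂ) = (r:ℂ) := Complex.conj_ofReal r
    rw [this]
    rw [show (r:ℂ) * Complex.exp (-((t:ℂ) * Complex.I)) * ((r:ℂ) * Complex.exp ((t:ℂ) * Complex.I))
      = (r:ℂ)^2 * (Complex.exp (-((t:ℂ) * Complex.I)) * Complex.exp ((t:ℂ) * Complex.I)) from by ring,
      ← Complex.exp_add]
    simp
  have hr2 : ((r:ℂ))^2 ≠ 0 := by
    simp [Complex.ofReal_ne_zero, hr0.ne']
  have hLHSint : (∫ t in (0:ℝ)..(2 * Real.pi),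
        f ((r:ℂ) * Complex.exp (t * Complex.I)) * u ((r:ℂ) * Complex.exp (t * Complex.I)))
      = (1/(r:ℂ)^2) * ∫ t in (0:ℝ)..(2*Real.pi),
          F ((r:ℂ) * Complex.exp (t * Complex.I)) * ((r:ℂ) * Complex.exp (t * Complex.I)) := by
    rw [← intervalIntegral.integral_const_mul]
    apply intervalIntegral.integral_congr
    intro t _
    beta_reduce
    have hFc : F ((r:ℂ) * Complex.exp (t * Complex.I)) * ((r:ℂ) * Complex.exp (t * Complex.I))
        = f ((r:ℂ) * Complex.exp (t * Complex.I)) * u ((r:ℂ) * Complex.exp (t * Complex.I)) * (r:ℂ)^2 := by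
      show f ((r:ℂ) * Complex.exp (t * Complex.I)) * (u ((r:ℂ) * Complex.exp (t * Complex.I)) * (starRingEnd ℂ) ((r:ℂ) * Complex.exp (t * Complex.I))) * ((r:ℂ) * Complex.exp (t * Complex.I)) = _
      rw [← hcc t]
      ring
    rw [hFc]
    rw [one_div_mul_eq_div, mul_div_assoc, div_self hr2, mul_one]
  rw [hRHS, hLHSint, hstokes]
  have hpine : ((Real.pi : ℂ)) ≠ 0 := by
    simp [Complex.ofReal_ne_zero, hpi.ne']
  field_simp
end

section
/- Let 0 < r < 1 and let μ be a finite positive Borel measure on ℂ whose support is contained in the closed disk {w ∈ ℂ : |w| ≤ r}. Then for every f in the disk algebra A(𝔻), ∫_ℂ f dμ = ∬_{𝔻} f(z) M(z) dx dy, where M(z) = (1/π) ∫_ℂ 1/(1 − conj(z)·w)² dμ(w) and z = x + iy ranges over the open unit disk 𝔻. -/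
open Complex MeasureTheory Metric Set

private lemma bergman_denom_lb {r : ℝ} {z w : ℂ} (hz : ‖z‖ ≤ 1) (hw : ‖w‖ ≤ r) :
    1 - r ≤ ‖1 - (starRingEnd ℂ) z * w‖ := by
  have h1 : ‖(starRingEnd ℂ) z * w‖ ≤ r := by
    rw [norm_mul, RCLike.norm_conj]
    calc ‖z‖ * ‖w‖ ≤ 1 * r := mul_le_mul hz hw (norm_nonneg _) zero_le_one
    _ = r := one_mul r
  calc 1 - r ≤ ‖(1 : ℂ)‖ - ‖(starRingEnd ℂ) z * w‖ := by
        rw [norm_one]; linarith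
  _ ≤ ‖1 - (starRingEnd ℂ) z * w‖ := norm_sub_norm_le _ _

private lemma bergman_denom_ne {r : ℝ} (hr1 : r < 1) {z w : ℂ} (hz : ‖z‖ ≤ 1)
    (hw : ‖w‖ ≤ r) : 1 - (starRingEnd ℂ) z * w ≠ 0 := by
  intro h
  have := bergman_denom_lb hz hw
  rw [h, norm_zero] at this
  linarith

private lemma bergman_inv_bound {r : ℝ} (hr1 : r < 1) {z w : ℂ} (hz : ‖z‖ ≤ 1)
    (hw : ‖w‖ ≤ r) : ‖((1 - (starRingEnd ℂ) z * w) ^ 2)⁻¹‖ ≤ ((1 - r) ^ 2)⁻¹ := by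
  have h0 : (0 : ℝ) < 1 - r := by linarith
  have hlb := bergman_denom_lb hz hw
  rw [norm_inv, norm_pow]
  apply inv_anti₀ (by positivity)
  exact pow_le_pow_left₀ h0.le hlb 2

private lemma bergman_circle_step {r : ℝ} (hr1 : r < 1)
    {f : ℂ → ℂ} (hfd : DifferentiableOn ℂ f (ball (0 : ℂ) 1))
    {w : ℂ} (hw : ‖w‖ ≤ r) {ρ : ℝ} (hρ : ρ ∈ Ioo (0 : ℝ) 1) :
    ∫ θ in Ioo (-Real.pi) Real.pi,
        f (circleMap 0 ρ θ) * ((1 - (starRingEnd ℂ) (circleMap 0 ρ θ) * w) ^ 2)⁻¹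
      = (2 * Real.pi : ℂ) *
        (f ((ρ : ℂ) ^ 2 * w) + (ρ : ℂ) ^ 2 * w * deriv f ((ρ : ℂ) ^ 2 * w)) := by
  obtain ⟨hρ0, hρ1⟩ := hρ
  have hr0' : (0 : ℝ) ≤ r := le_trans (norm_nonneg w) hw
  set a : ℂ := (ρ : ℂ) ^ 2 * w with ha_def
  have ha_norm : ‖a‖ < ρ := by
    have h1 : ‖a‖ = ρ ^ 2 * ‖w‖ := by
      rw [ha_def, norm_mul, norm_pow, Complex.norm_real, Real.norm_eq_abs, abs_of_pos hρ0]
    nlinarith [norm_nonneg w]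
  have ha_ball : a ∈ ball (0 : ℂ) ρ := mem_ball_zero_iff.mpr ha_norm
  have ha_ball1 : a ∈ ball (0 : ℂ) 1 := mem_ball_zero_iff.mpr (ha_norm.trans hρ1)
  set g : ℂ → ℂ := fun z => z * f z with hg_def
  have hg : DifferentiableOn ℂ g (ball (0 : ℂ) 1) :=
    differentiable_id.differentiableOn.mul hfd
  have hga : AnalyticAt ℂ g a := hg.analyticAt (isOpen_ball.mem_nhds ha_ball1)
  set h : ℂ → ℂ := dslope g a with hh_def
  have hhd : DifferentiableOn ℂ h (ball (0 : ℂ) 1) := by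
    intro z hz
    rcases eq_or_ne z a with rfl | hne
    · obtain ⟨p, hp⟩ := hga
      exact hp.has_fpower_series_dslope_fslope.analyticAt.differentiableAt.differentiableWithinAt
    · exact ((differentiableAt_dslope_of_ne hne).mpr
        (hg.differentiableAt (isOpen_ball.mem_nhds hz))).differentiableWithinAt
  have hfa : HasDerivAt f (deriv f a) a :=
    (hfd.differentiableAt (isOpen_ball.mem_nhds ha_ball1)).hasDerivAt
  have hgderiv : HasDerivAt g (1 * f a + a * deriv f a) a := (hasDerivAt_id a).mul hfa
  have hha : h a = f a + a * deriv f a := by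
    rw [hh_def, dslope_same, hgderiv.deriv, one_mul]
  have hsub_ne : ∀ z ∈ sphere (0 : ℂ) ρ, z - a ≠ 0 := by
    intro z hz
    have hz' : ‖z‖ = ρ := by simpa using hz
    intro hza
    rw [sub_eq_zero] at hza
    rw [hza] at hz'
    exact absurd hz' (ne_of_lt ha_norm)
  have hz_ne : ∀ z ∈ sphere (0 : ℂ) ρ, z ≠ 0 := by
    intro z hz h0
    have hz' : ‖z‖ = ρ := by simpa using hz
    rw [h0, norm_zero] at hz'; exact hρ0.ne hz'
  have hcauchy : (∮ z in C(0, ρ), (z - a)⁻¹ * h z) = (2 * Real.pi * I : ℂ) * h a := by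
    simpa [smul_eq_mul] using
      DifferentiableOn.circleIntegral_sub_inv_smul
        (hhd.mono (closedBall_subset_ball hρ1)) ha_ball
  have hzpow : (∮ z in C(0, ρ), (z - a) ^ (-2 : ℤ)) = 0 :=
    circleIntegral.integral_sub_zpow_of_ne (by decide) _ _ _
  have hcont_h : ContinuousOn h (sphere (0 : ℂ) ρ) :=
    (hhd.continuousOn).mono ((sphere_subset_closedBall).trans (closedBall_subset_ball hρ1))
  have hint1 : CircleIntegrable (fun z => (z - a)⁻¹ * h z) 0 ρ := by
    apply ContinuousOn.circleIntegrable hρ0.le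
    exact ((continuousOn_id.sub continuousOn_const).inv₀ hsub_ne).mul hcont_h
  have hint2 : CircleIntegrable (fun z => g a * (z - a) ^ (-2 : ℤ)) 0 ρ := by
    apply ContinuousOn.circleIntegrable hρ0.le
    exact continuousOn_const.mul
      ((continuousOn_id.sub continuousOn_const).zpow₀ _ (fun z hz => Or.inl (hsub_ne z hz)))
  have hadd : ∀ {F G : ℂ → ℂ}, CircleIntegrable F 0 ρ → CircleIntegrable G 0 ρ →
      (∮ z in C(0, ρ), (F z + G z)) = (∮ z in C(0, ρ), F z) + ∮ z in C(0, ρ), G z := by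
    intro F G hF hG
    simp only [circleIntegral, smul_add]
    exact intervalIntegral.integral_add hF.out hG.out
  set Φ : ℝ → ℂ := fun θ =>
    f (circleMap 0 ρ θ) * ((1 - (starRingEnd ℂ) (circleMap 0 ρ θ) * w) ^ 2)⁻¹ with hΦ_def
  have hper : Function.Periodic Φ (2 * Real.pi) :=
    (periodic_circleMap 0 ρ).comp
      (fun z => f z * ((1 - (starRingEnd ℂ) z * w) ^ 2)⁻¹)
  have step1 : ∫ θ in Ioo (-Real.pi) Real.pi, Φ θ = ∫ θ in (0 : ℝ)..(2 * Real.pi), Φ θ := by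
    rw [← MeasureTheory.integral_Ioc_eq_integral_Ioo,
      ← intervalIntegral.integral_of_le (by linarith [Real.pi_pos] : -Real.pi ≤ Real.pi)]
    have h2 := hper.intervalIntegral_add_eq (-Real.pi) 0
    rw [show -Real.pi + 2 * Real.pi = Real.pi by ring] at h2
    rw [h2, zero_add]
  have hker : ∀ z ∈ sphere (0 : ℂ) ρ,
      ((1 - (starRingEnd ℂ) z * w) ^ 2)⁻¹ = z ^ 2 * ((z - a) ^ 2)⁻¹ := by
    intro z hz
    have hnz := hz_ne z hz
    have hna := hsub_ne z hz
    have h1 : ‖z‖ = ρ := by simpa using hz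
    have hconj : (starRingEnd ℂ) z * z = ((ρ : ℂ)) ^ 2 := by
      rw [mul_comm, Complex.mul_conj, Complex.normSq_eq_norm_sq, h1]
      push_cast; ring
    have hcz : (starRingEnd ℂ) z = ((ρ : ℂ)) ^ 2 / z := by
      field_simp
      linear_combination hconj
    rw [hcz]
    have h2 : 1 - (ρ : ℂ) ^ 2 / z * w = (z - a) / z := by
      field_simp [ha_def]
      rw [ha_def]
    rw [h2, div_pow, inv_div, div_eq_mul_inv]
  have step2 : ∫ θ in (0 : ℝ)..(2 * Real.pi), Φ θ
      = ∮ z in C(0, ρ), (z * I)⁻¹ * (f z * (z ^ 2 * ((z - a) ^ 2)⁻¹)) := by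
    rw [circleIntegral]
    apply intervalIntegral.integral_congr
    intro θ _
    have hmem := circleMap_mem_sphere 0 hρ0.le θ
    have hne : circleMap 0 ρ θ * I ≠ 0 := mul_ne_zero (hz_ne _ hmem) I_ne_zero
    show Φ θ = deriv (circleMap 0 ρ) θ •
      ((circleMap 0 ρ θ * I)⁻¹ *
        (f (circleMap 0 ρ θ) * (circleMap 0 ρ θ ^ 2 * ((circleMap 0 ρ θ - a) ^ 2)⁻¹)))
    rw [deriv_circleMap, smul_eq_mul, mul_inv_cancel_left₀ hne]
    show f (circleMap 0 ρ θ) * ((1 - (starRingEnd ℂ) (circleMap 0 ρ θ) * w) ^ 2)⁻¹ = _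
    rw [hker _ hmem]
  have step3 : (∮ z in C(0, ρ), (z * I)⁻¹ * (f z * (z ^ 2 * ((z - a) ^ 2)⁻¹)))
      = ∮ z in C(0, ρ), (-I) * ((z - a)⁻¹ * h z + g a * (z - a) ^ (-2 : ℤ)) := by
    apply circleIntegral.integral_congr hρ0.le
    intro z hz
    have hnz := hz_ne z hz
    have hna := hsub_ne z hz
    have hzz : z ≠ a := fun hzz => hna (by rw [hzz, sub_self])
    have hhz : h z = (z - a)⁻¹ * (g z - g a) := by
      rw [hh_def, dslope_of_ne g hzz, slope_def_field, div_eq_inv_mul]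
    have hzp : (z - a) ^ (-2 : ℤ) = ((z - a) ^ 2)⁻¹ := by
      rw [zpow_neg]; norm_cast
    show (z * I)⁻¹ * (f z * (z ^ 2 * ((z - a) ^ 2)⁻¹))
        = (-I) * ((z - a)⁻¹ * h z + g a * (z - a) ^ (-2 : ℤ))
    rw [hzp, hhz, hg_def]
    have hIz : (z * I)⁻¹ = z⁻¹ * (-I) := by
      rw [mul_inv, Complex.inv_I]
    rw [hIz]
    field_simp
    ring
  rw [step1, step2, step3, circleIntegral.integral_const_mul, hadd hint1 hint2,
    hcauchy, circleIntegral.integral_const_mul, hzpow, mul_zero, add_zero, hha]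
  linear_combination (-(2 * (Real.pi : ℂ)) * (f a + a * deriv f a)) * Complex.I_sq

set_option maxHeartbeats 1000000 in
private lemma bergman_reproducing {r : ℝ} (hr0 : 0 < r) (hr1 : r < 1)
    {f : ℂ → ℂ} (hfc : ContinuousOn f (closedBall (0 : ℂ) 1))
    (hfd : DifferentiableOn ℂ f (ball (0 : ℂ) 1))
    {w : ℂ} (hw : ‖w‖ ≤ r) :
    ∫ z in ball (0 : ℂ) 1, f z * ((1 - (starRingEnd ℂ) z * w) ^ 2)⁻¹
      = (Real.pi : ℂ) * f w := by
  have h1r : (0 : ℝ) < 1 - r := by linarith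
  set F : ℂ → ℂ := fun z => f z * ((1 - (starRingEnd ℂ) z * w) ^ 2)⁻¹ with hF_def
  obtain ⟨C, hC⟩ := (isCompact_closedBall (0 : ℂ) 1).exists_bound_of_continuousOn hfc
  have hC0 : 0 ≤ C := le_trans (norm_nonneg _) (hC 0 (mem_closedBall_self zero_le_one))
  have hFcont : ContinuousOn F (ball (0 : ℂ) 1) := by
    apply (hfc.mono ball_subset_closedBall).mul
    apply ContinuousOn.inv₀
    · exact ((continuous_const.sub (Complex.continuous_conj.mul continuous_const)).pow 2).continuousOn
    · intro z hz
      exact pow_ne_zero 2 (bergman_denom_ne hr1 (le_of_lt (mem_ball_zero_iff.mp hz)) hw)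
  have hFbound : ∀ z ∈ ball (0 : ℂ) 1, ‖F z‖ ≤ C * ((1 - r) ^ 2)⁻¹ := by
    intro z hz
    have hz1 : ‖z‖ ≤ 1 := le_of_lt (mem_ball_zero_iff.mp hz)
    rw [hF_def]
    calc ‖f z * ((1 - (starRingEnd ℂ) z * w) ^ 2)⁻¹‖
        = ‖f z‖ * ‖((1 - (starRingEnd ℂ) z * w) ^ 2)⁻¹‖ := norm_mul _ _
      _ ≤ C * ((1 - r) ^ 2)⁻¹ := by
          apply mul_le_mul (hC z (ball_subset_closedBall hz))
            (bergman_inv_bound hr1 hz1 hw) (norm_nonneg _) hC0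
  -- the symm map is circleMap
  have hsymm_circle : ∀ p : ℝ × ℝ, Complex.polarCoord.symm p = circleMap 0 p.1 p.2 := by
    intro p
    rw [Complex.polarCoord_symm_apply, circleMap_zero, Complex.exp_mul_I, ← Complex.ofReal_cos,
      ← Complex.ofReal_sin]
  set S : Set (ℝ × ℝ) := Ioo (0 : ℝ) 1 ×ˢ Ioo (-Real.pi) Real.pi with hS_def
  have hSmeas : MeasurableSet S := (measurableSet_Ioo.prod measurableSet_Ioo)
  have hSsub : S ⊆ polarCoord.target := by
    rw [hS_def, polarCoord_target]
    exact prod_mono (Ioo_subset_Ioi_self) subset_rfl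
  set G : ℝ × ℝ → ℂ := fun p => p.1 • F (Complex.polarCoord.symm p) with hG_def
  -- polar change of variables
  have step1 : ∫ z in ball (0 : ℂ) 1, F z = ∫ p in S, G p := by
    rw [← MeasureTheory.integral_indicator measurableSet_ball,
      ← Complex.integral_comp_polarCoord_symm]
    rw [setIntegral_congr_fun polarCoord.open_target.measurableSet
      (g := indicator S G) ?_]
    · rw [setIntegral_indicator hSmeas, inter_eq_right.mpr hSsub]
    · intro p hp
      rw [polarCoord_target] at hp
      have hp1 : 0 < p.1 := hp.1
      have habs : ‖Complex.polarCoord.symm p‖ = |p.1| := by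
        rw [Complex.norm_polarCoord_symm]
      show p.1 • (ball (0:ℂ) 1).indicator F (Complex.polarCoord.symm p) = S.indicator G p
      by_cases h1 : p.1 < 1
      · have hm : Complex.polarCoord.symm p ∈ ball (0 : ℂ) 1 :=
          mem_ball_zero_iff.mpr (by rw [habs, abs_of_pos hp1]; exact h1)
        have hmS : p ∈ S := ⟨⟨hp1, h1⟩, hp.2⟩
        rw [indicator_of_mem hm, indicator_of_mem hmS]
      · have hm : Complex.polarCoord.symm p ∉ ball (0 : ℂ) 1 := by
          rw [mem_ball_zero_iff, habs, abs_of_pos hp1]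
          exact fun hc => h1 hc
        have hmS : p ∉ S := fun hmS => h1 hmS.1.2
        rw [indicator_of_notMem hm, indicator_of_notMem hmS, smul_zero]
  -- finiteness instances
  haveI i1 : IsFiniteMeasure (volume.restrict (Ioo (0 : ℝ) 1)) := by
    constructor
    rw [Measure.restrict_apply_univ, Real.volume_Ioo]
    exact ENNReal.ofReal_lt_top
  haveI i2 : IsFiniteMeasure (volume.restrict (Ioo (-Real.pi) Real.pi)) := by
    constructor
    rw [Measure.restrict_apply_univ, Real.volume_Ioo]
    exact ENNReal.ofReal_lt_top
  have hmeas_eq : (volume.restrict (Ioo (0 : ℝ) 1)).prod (volume.restrict (Ioo (-Real.pi) Real.pi))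
      = (volume : Measure (ℝ × ℝ)).restrict S := by
    rw [hS_def, Measure.volume_eq_prod, Measure.prod_restrict]
  -- continuity of G on S
  have hsymm_cont : Continuous (fun p : ℝ × ℝ => Complex.polarCoord.symm p) := by
    have h2 : Continuous fun p : ℝ × ℝ =>
        ((p.1 : ℂ)) * (Real.cos p.2 + Real.sin p.2 * I) := by
      refine (Complex.continuous_ofReal.comp continuous_fst).mul (Continuous.add ?_ ?_)
      · exact Complex.continuous_ofReal.comp (Real.continuous_cos.comp continuous_snd)
      · exact (Complex.continuous_ofReal.comp
          (Real.continuous_sin.comp continuous_snd)).mul continuous_const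
    refine h2.congr fun p => ?_
    rw [Complex.polarCoord_symm_apply]
  have hmapsto : MapsTo (fun p : ℝ × ℝ => Complex.polarCoord.symm p) S (ball (0 : ℂ) 1) := by
    intro p hp
    rw [mem_ball_zero_iff, Complex.norm_polarCoord_symm,
      abs_of_pos hp.1.1]
    exact hp.1.2
  have hGcont : ContinuousOn G S :=
    (continuous_fst.continuousOn).smul (hFcont.comp hsymm_cont.continuousOn hmapsto)
  -- integrability
  have hGint : Integrable G
      ((volume.restrict (Ioo (0 : ℝ) 1)).prod (volume.restrict (Ioo (-Real.pi) Real.pi))) := by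
    haveI : IsFiniteMeasure ((volume : Measure (ℝ × ℝ)).restrict S) := by
      rw [← hmeas_eq]; infer_instance
    rw [hmeas_eq]
    refine ⟨hGcont.aestronglyMeasurable hSmeas, ?_⟩
    apply MeasureTheory.HasFiniteIntegral.of_bounded
      (C := 1 * (C * ((1 - r) ^ 2)⁻¹))
    filter_upwards [ae_restrict_mem hSmeas] with p hp
    rw [hG_def]
    have h1 : ‖p.1 • F (Complex.polarCoord.symm p)‖ = |p.1| * ‖F (Complex.polarCoord.symm p)‖ := by
      rw [norm_smul, Real.norm_eq_abs]
    rw [h1]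
    apply mul_le_mul
    · rw [abs_of_pos hp.1.1]; exact hp.1.2.le
    · exact hFbound _ (hmapsto hp)
    · exact norm_nonneg _
    · exact zero_le_one
  have step2 : ∫ p in S, G p
      = ∫ ρ in Ioo (0 : ℝ) 1, ∫ θ in Ioo (-Real.pi) Real.pi, G (ρ, θ) := by
    rw [← hmeas_eq]
    exact MeasureTheory.integral_prod _ hGint
  -- inner integral via the circle step
  have step3 : ∫ ρ in Ioo (0 : ℝ) 1, (∫ θ in Ioo (-Real.pi) Real.pi, G (ρ, θ))
      = ∫ ρ in Ioo (0 : ℝ) 1, (ρ : ℂ) * ((2 * Real.pi : ℂ) *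
          (f ((ρ : ℂ) ^ 2 * w) + (ρ : ℂ) ^ 2 * w * deriv f ((ρ : ℂ) ^ 2 * w))) := by
    apply setIntegral_congr_fun measurableSet_Ioo
    intro ρ hρ
    have : ∀ θ : ℝ, G (ρ, θ) = ρ •
        (f (circleMap 0 ρ θ) * ((1 - (starRingEnd ℂ) (circleMap 0 ρ θ) * w) ^ 2)⁻¹) := by
      intro θ
      rw [hG_def]
      simp only [hsymm_circle (ρ, θ)]
      rfl
    simp only [this]
    rw [MeasureTheory.integral_smul, bergman_circle_step hr1 hfd hw hρ,
      Complex.real_smul]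
  -- FTC
  have hcont_deriv : ContinuousOn (deriv f) (ball (0 : ℂ) 1) :=
    ((hfd.analyticOnNhd isOpen_ball).deriv).continuousOn
  have hmem2 : ∀ ρ : ℝ, |ρ| ≤ 1 → ((ρ : ℂ) ^ 2 * w) ∈ ball (0 : ℂ) 1 := by
    intro ρ hρ
    rw [mem_ball_zero_iff]
    have : ‖(ρ : ℂ) ^ 2 * w‖ = ρ ^ 2 * ‖w‖ := by
      rw [norm_mul, norm_pow, Complex.norm_real, Real.norm_eq_abs, _root_.sq_abs]
    rw [this]
    have h2 : ρ ^ 2 ≤ 1 := by nlinarith [_root_.sq_abs ρ, abs_nonneg ρ]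
    calc ρ ^ 2 * ‖w‖ ≤ 1 * ‖w‖ := mul_le_mul_of_nonneg_right h2 (norm_nonneg w)
      _ = ‖w‖ := one_mul _
      _ ≤ r := hw
      _ < 1 := hr1
  set Ψ : ℝ → ℂ := fun ρ => (ρ : ℂ) * ((2 * Real.pi : ℂ) *
      (f ((ρ : ℂ) ^ 2 * w) + (ρ : ℂ) ^ 2 * w * deriv f ((ρ : ℂ) ^ 2 * w))) with hΨ_def
  set G1 : ℝ → ℂ := fun ρ => (Real.pi : ℂ) * ((ρ : ℂ) ^ 2 * f ((ρ : ℂ) ^ 2 * w)) with hG1_def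
  have hG1deriv : ∀ ρ ∈ uIcc (0 : ℝ) 1, HasDerivAt G1 (Ψ ρ) ρ := by
    intro ρ hρ
    rw [uIcc_of_le zero_le_one] at hρ
    have habs : |ρ| ≤ 1 := abs_le.mpr ⟨by linarith [hρ.1], hρ.2⟩
    have hz2w := hmem2 ρ habs
    set z : ℂ := (ρ : ℂ) with hz_def
    have hq : HasDerivAt (fun u : ℂ => u ^ 2 * w) (2 * z * w) z := by
      simpa using (hasDerivAt_pow 2 z).mul_const w
    have hf' : HasDerivAt f (deriv f (z ^ 2 * w)) (z ^ 2 * w) :=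
      (hfd.differentiableAt (isOpen_ball.mem_nhds hz2w)).hasDerivAt
    have hcomp : HasDerivAt (fun u : ℂ => f (u ^ 2 * w))
        (deriv f (z ^ 2 * w) * (2 * z * w)) z := hf'.comp z hq
    have hmul := (hasDerivAt_pow 2 z).mul hcomp
    have hconst := hmul.const_mul (Real.pi : ℂ)
    have hfinal := hconst.comp_ofReal
    convert hfinal using 1
    · rfl
    push_cast
    ring
  have hΨcont : ContinuousOn Ψ (uIcc (0 : ℝ) 1) := by
    rw [uIcc_of_le zero_le_one]
    have hq_cont : ContinuousOn (fun ρ : ℝ => (ρ : ℂ) ^ 2 * w) (Icc (0 : ℝ) 1) :=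
      ((Complex.continuous_ofReal.pow 2).mul continuous_const).continuousOn
    have hmapsto2 : MapsTo (fun ρ : ℝ => (ρ : ℂ) ^ 2 * w) (Icc (0 : ℝ) 1) (ball (0 : ℂ) 1) := by
      intro ρ hρ
      exact hmem2 ρ (abs_le.mpr ⟨by linarith [hρ.1], hρ.2⟩)
    apply (Complex.continuous_ofReal.continuousOn).mul
    apply continuousOn_const.mul
    apply ContinuousOn.add
    · exact (hfc.mono ball_subset_closedBall).comp hq_cont hmapsto2
    · exact hq_cont.mul (hcont_deriv.comp hq_cont hmapsto2)
  have step4 : ∫ ρ in Ioo (0 : ℝ) 1, Ψ ρ = (Real.pi : ℂ) * f w := by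
    rw [← MeasureTheory.integral_Ioc_eq_integral_Ioo,
      ← intervalIntegral.integral_of_le zero_le_one]
    rw [intervalIntegral.integral_eq_sub_of_hasDerivAt hG1deriv
      (hΨcont.intervalIntegrable)]
    rw [hG1_def]
    push_cast
    ring
  rw [step1, step2, step3, step4]

/-- Bergman-kernel area representation: for a finite positive Borel measure `μ` supported
in the closed disk of radius `r < 1` and `f` in the disk algebra,
`∫ f dμ = ∬_{𝔻} f(z) M(z) dx dy` with `M(z) = (1/π) ∫ 1/(1 − conj(z) w)² dμ(w)`. -/
theorem stmt11 (r : ℝ) (hr0 : 0 < r) (hr1 : r < 1)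
    (μ : Measure ℂ) [IsFiniteMeasure μ] (hsupp : μ (closedBall (0 : ℂ) r)ᶜ = 0)
    (M : ℂ → ℂ)
    (hM : ∀ z, M z = (1 / (Real.pi : ℂ)) * ∫ w, ((1 - (starRingEnd ℂ) z * w) ^ 2)⁻¹ ∂μ)
    (f : ℂ → ℂ) (hfc : ContinuousOn f (closedBall (0 : ℂ) 1))
    (hfd : DifferentiableOn ℂ f (ball (0 : ℂ) 1)) :
    ∫ w, f w ∂μ = ∫ z in ball (0 : ℂ) 1, f z * M z := by
  have h1r : (0 : ℝ) < 1 - r := by linarith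
  have hae : ∀ᵐ w ∂μ, w ∈ closedBall (0 : ℂ) r := by
    rw [MeasureTheory.ae_iff]
    exact hsupp
  have hres : μ.restrict (closedBall (0 : ℂ) r) = μ :=
    Measure.restrict_eq_self_of_ae_mem hae
  obtain ⟨C, hC⟩ := (isCompact_closedBall (0 : ℂ) 1).exists_bound_of_continuousOn hfc
  have hC0 : 0 ≤ C := le_trans (norm_nonneg _) (hC 0 (mem_closedBall_self zero_le_one))
  set T : Set (ℂ × ℂ) := (ball (0 : ℂ) 1) ×ˢ (closedBall (0 : ℂ) r) with hT_def
  have hTmeas : MeasurableSet T := measurableSet_ball.prod measurableSet_closedBall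
  set F2 : ℂ × ℂ → ℂ := fun q => f q.1 * ((1 - (starRingEnd ℂ) q.1 * q.2) ^ 2)⁻¹ with hF2_def
  have key : (volume.restrict (ball (0 : ℂ) 1)).prod μ = (volume.prod μ).restrict T := by
    conv_lhs => rw [← hres, Measure.prod_restrict]
  haveI i1 : IsFiniteMeasure (volume.restrict (ball (0 : ℂ) 1)) := by
    constructor
    rw [Measure.restrict_apply_univ]
    exact measure_ball_lt_top
  haveI i2 : IsFiniteMeasure ((volume.prod μ).restrict T) := by
    rw [← key]; infer_instance
  have hF2cont : ContinuousOn F2 T := by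
    apply ContinuousOn.mul
    · exact (hfc.mono ball_subset_closedBall).comp continuous_fst.continuousOn
        (fun q hq => hq.1)
    · apply ContinuousOn.inv₀
      · exact ((continuous_const.sub ((Complex.continuous_conj.comp continuous_fst).mul
          continuous_snd)).pow 2).continuousOn
      · intro q hq
        exact pow_ne_zero 2 (bergman_denom_ne hr1 (le_of_lt (mem_ball_zero_iff.mp hq.1))
          (mem_closedBall_zero_iff.mp hq.2))
  have hF2int : Integrable F2 ((volume.restrict (ball (0 : ℂ) 1)).prod μ) := by
    rw [key]
    refine ⟨hF2cont.aestronglyMeasurable hTmeas, ?_⟩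
    apply MeasureTheory.HasFiniteIntegral.of_bounded (C := C * ((1 - r) ^ 2)⁻¹)
    filter_upwards [ae_restrict_mem hTmeas] with q hq
    rw [hF2_def]
    calc ‖f q.1 * ((1 - (starRingEnd ℂ) q.1 * q.2) ^ 2)⁻¹‖
        = ‖f q.1‖ * ‖((1 - (starRingEnd ℂ) q.1 * q.2) ^ 2)⁻¹‖ := norm_mul _ _
      _ ≤ C * ((1 - r) ^ 2)⁻¹ := by
          apply mul_le_mul (hC q.1 (ball_subset_closedBall hq.1))
            (bergman_inv_bound hr1 (le_of_lt (mem_ball_zero_iff.mp hq.1))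
              (mem_closedBall_zero_iff.mp hq.2)) (norm_nonneg _) hC0
  have hπ : (Real.pi : ℂ) ≠ 0 := by
    exact_mod_cast Real.pi_ne_zero
  symm
  calc ∫ z in ball (0 : ℂ) 1, f z * M z
      = ∫ z in ball (0 : ℂ) 1, (1 / (Real.pi : ℂ)) *
          ∫ w, f z * ((1 - (starRingEnd ℂ) z * w) ^ 2)⁻¹ ∂μ := by
        apply setIntegral_congr_fun measurableSet_ball
        intro z _
        show f z * M z
          = 1 / (Real.pi : ℂ) * ∫ w, f z * ((1 - (starRingEnd ℂ) z * w) ^ 2)⁻¹ ∂μ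
        rw [hM z, MeasureTheory.integral_const_mul]
        ring
    _ = (1 / (Real.pi : ℂ)) * ∫ z in ball (0 : ℂ) 1,
          ∫ w, f z * ((1 - (starRingEnd ℂ) z * w) ^ 2)⁻¹ ∂μ :=
        MeasureTheory.integral_const_mul _ _
    _ = (1 / (Real.pi : ℂ)) * ∫ w, (∫ z in ball (0 : ℂ) 1,
          f z * ((1 - (starRingEnd ℂ) z * w) ^ 2)⁻¹) ∂μ := by
        congr 1
        exact MeasureTheory.integral_integral_swap hF2int
    _ = (1 / (Real.pi : ℂ)) * ∫ w, (Real.pi : ℂ) * f w ∂μ := by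
        congr 1
        apply integral_congr_ae
        filter_upwards [hae] with w hwball
        exact bergman_reproducing hr0 hr1 hfc hfd (mem_closedBall_zero_iff.mp hwball)
    _ = ∫ w, f w ∂μ := by
        rw [MeasureTheory.integral_const_mul, ← mul_assoc]
        field_simp
end

section
/- Let 0 < r < 1 and let k be a probability Borel measure on the unit circle (equivalently, on [0, 2π)). Define ψ(z) = ∫ 1/(1 − z r e^{−it'}) dk(t') for |z| < 1/r. Then ψ is holomorphic on {z ∈ ℂ : |z| < 1/r}, and for every f in the disk algebra A(𝔻), ∫ f(r e^{it'}) dk(t') = (1/2π) ∫₀^{2π} f(e^{it}) conj(ψ(e^{it})) dt. -/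
open Complex MeasureTheory Metric

private lemma absExpNegI (t : ℝ) : ‖Complex.exp (-(↑t * Complex.I))‖ = 1 := by
  rw [show -((t : ℂ) * Complex.I) = ((-t : ℝ) : ℂ) * Complex.I by push_cast; ring]
  exact Complex.norm_exp_ofReal_mul_I _

private lemma one_sub_ne {a : ℂ} (h : ‖a‖ < 1) : (1 : ℂ) - a ≠ 0 := by
  intro h0
  rw [sub_eq_zero] at h0
  rw [← h0] at h
  simp at h

private lemma conj_expI (s : ℝ) :
    (starRingEnd ℂ) (Complex.exp (↑s * Complex.I)) = Complex.exp (-(↑s * Complex.I)) := by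
  rw [← Complex.exp_conj]
  congr 1
  simp

private lemma conj_expNegI (s : ℝ) :
    (starRingEnd ℂ) (Complex.exp (-(↑s * Complex.I))) = Complex.exp (↑s * Complex.I) := by
  rw [← Complex.exp_conj]
  congr 1
  simp

/-- Cauchy integral formula for the disk algebra, in "Poisson-like" form. -/
private lemma cauchy_form {f : ℂ → ℂ} (hc : ContinuousOn f (closedBall 0 1))
    (hd : DifferentiableOn ℂ f (ball 0 1)) {w : ℂ} (hw : ‖w‖ < 1) :
    f w = (1 / (2 * (Real.pi : ℂ))) *
      ∫ t in (0:ℝ)..(2 * Real.pi),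
        f (Complex.exp (↑t * Complex.I)) * (1 - w * Complex.exp (-(↑t * Complex.I)))⁻¹ := by
  have hwmem : w ∈ ball (0 : ℂ) 1 := by
    simpa [mem_ball, Complex.dist_eq] using hw
  have h2 := Complex.circleIntegral_sub_inv_smul_of_differentiable_on_off_countable
    (s := ∅) Set.countable_empty hwmem hc
    (fun x hx => (hd x hx.1).differentiableAt (isOpen_ball.mem_nhds hx.1))
  rw [circleIntegral] at h2
  simp only [deriv_circleMap, circleMap, ofReal_one, one_mul, zero_add, smul_eq_mul] at h2
  have key : ∀ t : ℝ,
      Complex.exp (↑t * Complex.I) * Complex.I *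
        ((Complex.exp (↑t * Complex.I) - w)⁻¹ * f (Complex.exp (↑t * Complex.I))) =
      Complex.I * (f (Complex.exp (↑t * Complex.I)) *
        (1 - w * Complex.exp (-(↑t * Complex.I)))⁻¹) := by
    intro t
    have he : Complex.exp (↑t * Complex.I) ≠ 0 := Complex.exp_ne_zero _
    have hsub : Complex.exp (↑t * Complex.I) - w ≠ 0 := by
      intro h0
      rw [sub_eq_zero] at h0
      rw [← h0, Complex.norm_exp_ofReal_mul_I] at hw
      exact lt_irrefl _ hw
    have hfact : (1 : ℂ) - w * Complex.exp (-(↑t * Complex.I)) =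
        (Complex.exp (↑t * Complex.I) - w) * Complex.exp (-(↑t * Complex.I)) := by
      rw [sub_mul, ← Complex.exp_add]
      simp
    rw [hfact, mul_inv, Complex.exp_neg, inv_inv]
    field_simp
  rw [intervalIntegral.integral_congr (fun t _ => key t),
    intervalIntegral.integral_const_mul] at h2
  have hI : (Complex.I : ℂ) ≠ 0 := Complex.I_ne_zero
  have hπ : ((Real.pi : ℂ)) ≠ 0 := by
    simpa using Complex.ofReal_ne_zero.mpr Real.pi_ne_zero
  have h3 : (∫ t in (0:ℝ)..(2 * Real.pi),
      f (Complex.exp (↑t * Complex.I)) * (1 - w * Complex.exp (-(↑t * Complex.I)))⁻¹)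
      = 2 * (Real.pi : ℂ) * f w := by
    apply mul_left_cancel₀ hI
    rw [h2]
    ring
  rw [h3]
  field_simp

/-- For `0 < r < 1` and a probability measure `k` on the unit circle (parametrized by
angles), the Borel transform `ψ(z) = ∫ 1/(1 − z r e^{−it'}) dk(t')` is holomorphic on
`D(0,1/r)` and, for every `f` in the disk algebra,
`∫ f(r e^{it'}) dk(t') = (1/2π) ∫₀^{2π} f(e^{it}) conj(ψ(e^{it})) dt`. -/
theorem stmt13 (r : ℝ) (hr0 : 0 < r) (hr1 : r < 1)
    (k : Measure ℝ) [IsProbabilityMeasure k]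
    (ψ : ℂ → ℂ)
    (hψ : ∀ z, ψ z = ∫ t', (1 - z * r * Complex.exp (-(t' * Complex.I)))⁻¹ ∂k) :
    DifferentiableOn ℂ ψ (ball (0 : ℂ) (1 / r)) ∧
    (∀ f : ℂ → ℂ, ContinuousOn f (closedBall (0 : ℂ) 1) →
      DifferentiableOn ℂ f (ball (0 : ℂ) 1) →
      ∫ t', f (r * Complex.exp (t' * Complex.I)) ∂k =
        (1 / (2 * (Real.pi : ℂ))) *
          ∫ t in (0:ℝ)..(2 * Real.pi),
            f (Complex.exp (t * Complex.I)) *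
              (starRingEnd ℂ) (ψ (Complex.exp (t * Complex.I)))) := by
  constructor
  · -- differentiability
    intro z₀ hz₀
    apply DifferentiableAt.differentiableWithinAt
    rw [mem_ball, dist_zero_right] at hz₀
    set ε : ℝ := (1 / r - ‖z₀‖) / 2 with hε_def
    have hεpos : 0 < ε := by
      have : ‖z₀‖ < 1 / r := hz₀
      simp only [hε_def]
      linarith
    have hrinv : r * (1 / r) = 1 := mul_one_div_cancel hr0.ne'
    set c : ℝ := r * (‖z₀‖ + ε) with hc_def
    have hc1 : c < 1 := by
      have h1 : ‖z₀‖ + ε < 1 / r := by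
        simp only [hε_def]; linarith
      calc c = r * (‖z₀‖ + ε) := hc_def
        _ < r * (1 / r) := by exact mul_lt_mul_of_pos_left h1 hr0
        _ = 1 := hrinv
    have hc0 : 0 ≤ c := by
      apply mul_nonneg hr0.le
      positivity
    set F : ℂ → ℝ → ℂ := fun x t' => (1 - x * ↑r * Complex.exp (-(↑t' * Complex.I)))⁻¹
      with hF_def
    set F' : ℂ → ℝ → ℂ :=
      fun x t' => ↑r * Complex.exp (-(↑t' * Complex.I)) /
        (1 - x * (↑r * Complex.exp (-(↑t' * Complex.I)))) ^ 2 with hF'_def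
    have habs : ∀ (x : ℂ) (t' : ℝ),
        ‖x * ↑r * Complex.exp (-(↑t' * Complex.I))‖ = ‖x‖ * r := by
      intro x t'
      rw [norm_mul, norm_mul, absExpNegI, mul_one, Complex.norm_real, Real.norm_eq_abs,
        abs_of_pos hr0]
    have hlow : ∀ (x : ℂ) (t' : ℝ), ‖x‖ ≤ ‖z₀‖ + ε →
        1 - c ≤ ‖1 - x * ↑r * Complex.exp (-(↑t' * Complex.I))‖ := by
      intro x t' hx
      have h1 : ‖x * ↑r * Complex.exp (-(↑t' * Complex.I))‖ ≤ c := by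
        rw [habs, hc_def]
        exact mul_le_mul_of_nonneg_right hx hr0.le |>.trans_eq (mul_comm _ _)
      have h2 := norm_sub_norm_le (1 : ℂ) (x * ↑r * Complex.exp (-(↑t' * Complex.I)))
      rw [norm_one] at h2
      linarith
    have hball : ∀ x ∈ ball z₀ ε, ‖x‖ ≤ ‖z₀‖ + ε := by
      intro x hx
      rw [mem_ball, dist_eq_norm] at hx
      calc ‖x‖ = ‖z₀ + (x - z₀)‖ := by ring_nf
        _ ≤ ‖z₀‖ + ‖x - z₀‖ := norm_add_le _ _
        _ ≤ ‖z₀‖ + ε := by linarith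
    have hne : ∀ x ∈ ball z₀ ε, ∀ t' : ℝ,
        (1 : ℂ) - x * ↑r * Complex.exp (-(↑t' * Complex.I)) ≠ 0 := by
      intro x hx t'
      intro h0
      have := hlow x t' (hball x hx)
      rw [h0] at this
      simp at this
      linarith
    have hz₀mem : z₀ ∈ ball z₀ ε := mem_ball_self hεpos
    have hFcont : ∀ x ∈ ball z₀ ε, Continuous (F x) := by
      intro x hx
      apply Continuous.inv₀
      · exact continuous_const.sub (continuous_const.mul
          (Complex.continuous_exp.comp (continuous_ofReal.mul continuous_const).neg))
      · exact fun t' => hne x hx t'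
    have hF'cont : Continuous (F' z₀) := by
      apply Continuous.div
      · exact continuous_const.mul
          (Complex.continuous_exp.comp (continuous_ofReal.mul continuous_const).neg)
      · exact (continuous_const.sub (continuous_const.mul (continuous_const.mul
          (Complex.continuous_exp.comp (continuous_ofReal.mul continuous_const).neg)))).pow 2
      · intro t'
        apply pow_ne_zero
        have := hne z₀ hz₀mem t'
        rwa [mul_assoc] at this
    have key := hasDerivAt_integral_of_dominated_loc_of_deriv_le (μ := k) (x₀ := z₀)
      (F := F) (F' := F') (bound := fun _ => r / (1 - c) ^ 2) (ball_mem_nhds z₀ hεpos)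
      (Filter.eventually_of_mem (ball_mem_nhds z₀ hεpos)
        (fun x hx => (hFcont x hx).aestronglyMeasurable))
      (by -- integrability of F z₀
        apply Integrable.mono' (integrable_const ((1 - c)⁻¹))
          ((hFcont z₀ hz₀mem).aestronglyMeasurable)
        filter_upwards with t'
        rw [hF_def]
        simp only
        rw [norm_inv]
        rw [inv_le_inv₀]
        · exact hlow z₀ t' (hball z₀ hz₀mem)
        · exact lt_of_lt_of_le (by linarith) (hlow z₀ t' (hball z₀ hz₀mem))
        · linarith)
      hF'cont.aestronglyMeasurable
      (by -- bound for F'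
        filter_upwards with t' x hx
        rw [hF'_def]
        simp only
        rw [norm_div, norm_mul, norm_pow, Complex.norm_real, Real.norm_eq_abs,
          abs_of_pos hr0, absExpNegI, mul_one]
        have hlb : 1 - c ≤ ‖1 - x * (↑r * Complex.exp (-(↑t' * Complex.I)))‖ := by
          rw [← mul_assoc]
          exact hlow x t' (hball x hx)
        have h1c : (0:ℝ) < 1 - c := by linarith
        apply div_le_div_of_nonneg_left hr0.le (by positivity)
        exact pow_le_pow_left₀ h1c.le hlb 2 |>.trans_eq rfl |> fun h => h)
      (integrable_const _)
      (by -- differentiability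
        filter_upwards with t' x hx
        have hne' : (1 : ℂ) - x * (↑r * Complex.exp (-(↑t' * Complex.I))) ≠ 0 := by
          have := hne x hx t'
          rwa [mul_assoc] at this
        have h1 : HasDerivAt (fun y : ℂ => 1 - y * (↑r * Complex.exp (-(↑t' * Complex.I))))
            (-(↑r * Complex.exp (-(↑t' * Complex.I)))) x :=
          (hasDerivAt_mul_const _).const_sub 1
        have h2 := h1.inv hne'
        simp only [neg_neg] at h2
        rw [hF_def, hF'_def]
        simp only
        have h3 : (fun y : ℂ => 1 - y * (↑r * Complex.exp (-(↑t' * Complex.I))))⁻¹ =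
            fun y : ℂ => (1 - y * ↑r * Complex.exp (-(↑t' * Complex.I)))⁻¹ := by
          funext y
          simp only [Pi.inv_apply, mul_assoc]
        rw [h3] at h2
        exact h2)
    have hψ_eq : ψ = fun x => ∫ t', F x t' ∂k := funext hψ
    rw [hψ_eq]
    exact key.2.differentiableAt
  · -- the integral identity
    intro f hfc hfd
    have πpos := Real.pi_pos
    set e : ℝ → ℂ := fun t => Complex.exp (↑t * Complex.I) with he_def
    have habse : ∀ t : ℝ, ‖e t‖ = 1 := fun t => Complex.norm_exp_ofReal_mul_I t
    have memS : ∀ t : ℝ, e t ∈ closedBall (0 : ℂ) 1 := by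
      intro t
      simp [mem_closedBall, Complex.dist_eq, habse t]
    obtain ⟨C, hC⟩ := (isCompact_closedBall (0 : ℂ) 1).exists_bound_of_continuousOn hfc
    have hC0 : 0 ≤ C := le_trans (norm_nonneg _) (hC 0 (by simp))
    have habsw : ∀ t' : ℝ, ‖↑r * e t'‖ = r := by
      intro t'
      rw [norm_mul, habse, mul_one, Complex.norm_real, Real.norm_eq_abs, abs_of_pos hr0]
    -- Step A : Cauchy formula pointwise
    have hA : ∀ t' : ℝ, f (↑r * e t') =
        (1 / (2 * (Real.pi : ℂ))) * ∫ t in (0:ℝ)..(2 * Real.pi),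
          f (e t) * (1 - ↑r * e t' * Complex.exp (-(↑t * Complex.I)))⁻¹ := by
      intro t'
      exact cauchy_form hfc hfd (by rw [habsw]; exact hr1)
    set ν : Measure ℝ := volume.restrict (Set.Ioc 0 (2 * Real.pi)) with hν_def
    haveI : IsFiniteMeasure ν := by
      constructor
      rw [hν_def, Measure.restrict_apply_univ, Real.volume_Ioc]
      exact ENNReal.ofReal_lt_top
    set G : ℝ → ℝ → ℂ := fun t' t =>
      f (e t) * (1 - ↑r * e t' * Complex.exp (-(↑t * Complex.I)))⁻¹ with hG_def
    have hne : ∀ t' t : ℝ, (1 : ℂ) - ↑r * e t' * Complex.exp (-(↑t * Complex.I)) ≠ 0 := by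
      intro t' t
      apply one_sub_ne
      rw [norm_mul, habsw, absExpNegI, mul_one]
      exact hr1
    have hcontG : Continuous (Function.uncurry G) := by
      apply Continuous.mul
      · apply hfc.comp_continuous
        · exact Complex.continuous_exp.comp
            ((continuous_ofReal.comp continuous_snd).mul continuous_const)
        · exact fun p => memS p.2
      · apply Continuous.inv₀
        · apply continuous_const.sub
          apply Continuous.mul
          · exact continuous_const.mul (Complex.continuous_exp.comp
              ((continuous_ofReal.comp continuous_fst).mul continuous_const))
          · exact Complex.continuous_exp.comp
              ((continuous_ofReal.comp continuous_snd).mul continuous_const).neg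
        · exact fun p => hne p.1 p.2
    have hGbound : ∀ p : ℝ × ℝ, ‖Function.uncurry G p‖ ≤ C * (1 - r)⁻¹ := by
      intro p
      rw [Function.uncurry, hG_def]
      simp only
      rw [norm_mul, norm_inv]
      have h1 : ‖f (e p.2)‖ ≤ C := hC _ (memS p.2)
      have hnormw : ‖(↑r * e p.1 * Complex.exp (-(↑p.2 * Complex.I)) : ℂ)‖ = r := by
        rw [norm_mul, habsw, absExpNegI, mul_one]
      have h2 : (1 : ℝ) - r ≤ ‖(1 : ℂ) - ↑r * e p.1 * Complex.exp (-(↑p.2 * Complex.I))‖ := by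
        have h4 := norm_sub_norm_le (1 : ℂ) (↑r * e p.1 * Complex.exp (-(↑p.2 * Complex.I)))
        rw [norm_one, hnormw] at h4
        linarith
      have h3 : ‖(1 : ℂ) - ↑r * e p.1 * Complex.exp (-(↑p.2 * Complex.I))‖⁻¹ ≤ (1 - r)⁻¹ :=
        inv_anti₀ (by linarith) h2
      exact mul_le_mul h1 h3 (by positivity) hC0
    have hGint : Integrable (Function.uncurry G) (k.prod ν) := by
      apply Integrable.mono' (integrable_const (C * (1 - r)⁻¹))
        hcontG.aestronglyMeasurable
      filter_upwards with p
      exact hGbound p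
    -- conj ψ on the circle
    have hconjψ : ∀ t : ℝ, (starRingEnd ℂ) (ψ (e t)) =
        ∫ t', (1 - ↑r * e t' * Complex.exp (-(↑t * Complex.I)))⁻¹ ∂k := by
      intro t
      rw [hψ (e t), ← integral_conj]
      apply integral_congr_ae
      filter_upwards with t'
      rw [map_inv₀, map_sub, map_one, map_mul, map_mul]
      rw [show ((starRingEnd ℂ) (e t)) = Complex.exp (-(↑t * Complex.I)) from conj_expI t,
        show ((starRingEnd ℂ) (↑r : ℂ)) = (↑r : ℂ) from Complex.conj_ofReal r,
        conj_expNegI t']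
      congr 1
      rw [he_def]
      ring
    -- main computation
    calc ∫ t', f (↑r * Complex.exp (↑t' * Complex.I)) ∂k
        = ∫ t', ((1 / (2 * (Real.pi : ℂ))) * ∫ t in (0:ℝ)..(2 * Real.pi),
            f (e t) * (1 - ↑r * e t' * Complex.exp (-(↑t * Complex.I)))⁻¹) ∂k := by
          apply integral_congr_ae
          filter_upwards with t'
          exact hA t'
      _ = (1 / (2 * (Real.pi : ℂ))) * ∫ t', (∫ t in (0:ℝ)..(2 * Real.pi),
            f (e t) * (1 - ↑r * e t' * Complex.exp (-(↑t * Complex.I)))⁻¹) ∂k := by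
          rw [integral_const_mul]
      _ = (1 / (2 * (Real.pi : ℂ))) * ∫ t', (∫ t, G t' t ∂ν) ∂k := by
          congr 1
          apply integral_congr_ae
          filter_upwards with t'
          rw [intervalIntegral.integral_of_le (by positivity)]
      _ = (1 / (2 * (Real.pi : ℂ))) * ∫ t, (∫ t', G t' t ∂k) ∂ν := by
          rw [integral_integral_swap hGint]
      _ = (1 / (2 * (Real.pi : ℂ))) * ∫ t, f (e t) * (starRingEnd ℂ) (ψ (e t)) ∂ν := by
          congr 1
          apply integral_congr_ae
          filter_upwards with t
          rw [hG_def, hconjψ t]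
          simp only
          exact integral_const_mul _ _
      _ = (1 / (2 * (Real.pi : ℂ))) * ∫ t in (0:ℝ)..(2 * Real.pi),
            f (Complex.exp (↑t * Complex.I)) * (starRingEnd ℂ) (ψ (Complex.exp (↑t * Complex.I))) := by
          congr 1
          rw [intervalIntegral.integral_of_le (by positivity)]
end

section
/- Let H be a complex Hilbert space, let A and B be bounded linear operators on H with ‖A‖ ≤ 1 and ‖B‖ ≤ 1, and let e₁, …, e_k be an orthonormal family in H whose span V satisfies B V ⊆ V. Then for every natural number j, | ∑_{i=1}^k ⟨e_i, (A^j − B^j) e_i⟩ | ≤ j · ∑_{i=1}^k ‖(A − B) e_i‖. -/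
open Complex
open scoped InnerProductSpace ComplexInnerProductSpace

private lemma telescope_pow_sub' {R : Type*} [Ring R] (A B : R) (j : ℕ) :
    A ^ j - B ^ j = ∑ m ∈ Finset.range j, A ^ m * (A - B) * B ^ (j - 1 - m) := by
  induction j with
  | zero => simp
  | succ j ih =>
    rw [Finset.sum_range_succ]
    have h1 : ∀ m ∈ Finset.range j,
        A ^ m * (A - B) * B ^ (j + 1 - 1 - m) = (A ^ m * (A - B) * B ^ (j - 1 - m)) * B := by
      intro m hm
      rw [Finset.mem_range] at hm
      have : j + 1 - 1 - m = (j - 1 - m) + 1 := by omega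
      rw [this, pow_succ]
      noncomm_ring
    rw [Finset.sum_congr rfl h1, ← Finset.sum_mul, ← ih]
    have h0 : j + 1 - 1 - j = 0 := by omega
    rw [h0, pow_zero, mul_one, pow_succ, pow_succ]
    noncomm_ring

/-- Squared norm of a finite orthonormal combination. -/
private lemma on_norm_sq' {H : Type*} [NormedAddCommGroup H] [InnerProductSpace ℂ H]
    {k : ℕ} {e : Fin k → H} (he : Orthonormal ℂ e) (a : Fin k → ℂ) :
    ‖∑ i, a i • e i‖ ^ 2 = ∑ i, ‖a i‖ ^ 2 := by
  have h := he.inner_sum a a Finset.univ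
  calc ‖∑ i, a i • e i‖ ^ 2
      = RCLike.re (⟪∑ i, a i • e i, ∑ i, a i • e i⟫_ℂ) := (inner_self_eq_norm_sq _).symm
    _ = RCLike.re (∑ i, (starRingEnd ℂ) (a i) * a i) := by rw [h]
    _ = ∑ i, ‖a i‖ ^ 2 := by
        rw [map_sum]
        refine Finset.sum_congr rfl fun i _ => ?_
        rw [mul_comm, Complex.mul_conj, Complex.normSq_eq_norm_sq]
        norm_cast

/-- Bessel-type inequality for a continuous linear functional on an orthonormal family. -/
private lemma functional_bessel' {H : Type*} [NormedAddCommGroup H] [InnerProductSpace ℂ H]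
    {k : ℕ} {e : Fin k → H} (he : Orthonormal ℂ e) (f : H →L[ℂ] ℂ) :
    ∑ i, ‖f (e i)‖ ^ 2 ≤ ‖f‖ ^ 2 := by
  classical
  set v : H := ∑ i, (starRingEnd ℂ (f (e i))) • e i with hv
  set S : ℝ := ∑ i, ‖f (e i)‖ ^ 2 with hSdef
  have hS0 : 0 ≤ S := Finset.sum_nonneg fun i _ => sq_nonneg _
  have hnorm : ‖v‖ ^ 2 = S := by
    rw [hv, on_norm_sq' he]
    simp [hSdef]
  have hfv : f v = (S : ℂ) := by
    rw [hv, map_sum, hSdef]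
    push_cast
    refine Finset.sum_congr rfl fun i _ => ?_
    rw [map_smul, smul_eq_mul, mul_comm, Complex.mul_conj, Complex.normSq_eq_norm_sq]
    norm_cast
  have hle : S ≤ ‖f‖ * ‖v‖ := by
    have h1 : ‖f v‖ = S := by rw [hfv, Complex.norm_real]; exact Real.norm_of_nonneg hS0
    calc S = ‖f v‖ := h1.symm
      _ ≤ ‖f‖ * ‖v‖ := f.le_opNorm v
  nlinarith [hle, hnorm, sq_nonneg (‖f‖ - ‖v‖)]

/-- Trace-per-unit-volume estimate: for contractions `A, B` on a complex Hilbert space and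
an orthonormal family `e₁, …, e_k` whose span is invariant under `B`, for every `j`,
`|∑ᵢ ⟪eᵢ, (A^j − B^j) eᵢ⟫| ≤ j ∑ᵢ ‖(A − B) eᵢ‖`. -/
theorem stmt18 {H : Type*} [NormedAddCommGroup H] [InnerProductSpace ℂ H]
    (A B : H →L[ℂ] H) (hA : ‖A‖ ≤ 1) (hB : ‖B‖ ≤ 1)
    (k : ℕ) (e : Fin k → H) (he : Orthonormal ℂ e)
    (hinv : ∀ v ∈ Submodule.span ℂ (Set.range e), B v ∈ Submodule.span ℂ (Set.range e))
    (j : ℕ) :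
    ‖∑ i, ⟪e i, (A ^ j - B ^ j) (e i)⟫_ℂ‖ ≤ (j : ℝ) * ∑ i, ‖(A - B) (e i)‖ := by
  classical
  -- norms of powers
  have hpow : ∀ (T : H →L[ℂ] H), ‖T‖ ≤ 1 → ∀ s : ℕ, ‖T ^ s‖ ≤ 1 := by
    intro T hT s
    induction s with
    | zero => rw [pow_zero]; exact ContinuousLinearMap.norm_id_le
    | succ s ih =>
      calc ‖T ^ (s + 1)‖ = ‖T * T ^ s‖ := by rw [pow_succ']
        _ ≤ ‖T‖ * ‖T ^ s‖ := norm_mul_le _ _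
        _ ≤ 1 * 1 := mul_le_mul hT ih (norm_nonneg _) zero_le_one
        _ = 1 := one_mul 1
  -- invariance of the span under powers of B
  have hmem : ∀ (s : ℕ) (i : Fin k), (B ^ s) (e i) ∈ Submodule.span ℂ (Set.range e) := by
    intro s i
    induction s with
    | zero => simpa using Submodule.subset_span (Set.mem_range_self i)
    | succ s ih =>
      have h : (B ^ (s + 1)) (e i) = B ((B ^ s) (e i)) := by rw [pow_succ']; rfl
      rw [h]; exact hinv _ ih
  rw [telescope_pow_sub']
  have step1 : ∑ i, ⟪e i, (∑ m ∈ Finset.range j, A ^ m * (A - B) * B ^ (j - 1 - m)) (e i)⟫_ℂ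
      = ∑ m ∈ Finset.range j, ∑ i, ⟪e i, (A ^ m) ((A - B) ((B ^ (j - 1 - m)) (e i)))⟫_ℂ := by
    have : ∀ i : Fin k, (∑ m ∈ Finset.range j, A ^ m * (A - B) * B ^ (j - 1 - m)) (e i)
        = ∑ m ∈ Finset.range j, (A ^ m) ((A - B) ((B ^ (j - 1 - m)) (e i))) := by
      intro i; rw [ContinuousLinearMap.sum_apply]; rfl
    simp_rw [this, inner_sum]
    exact Finset.sum_comm
  rw [step1]
  have keym : ∀ m ∈ Finset.range j,
      ‖∑ i, ⟪e i, (A ^ m) ((A - B) ((B ^ (j - 1 - m)) (e i)))⟫_ℂ‖ ≤ ∑ l, ‖(A - B) (e l)‖ := by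
    intro m _
    set s := j - 1 - m with hs
    set c : Fin k → Fin k → ℂ := fun l i => ⟪e l, (B ^ s) (e i)⟫_ℂ with hc
    -- expansion of B^s e i in the orthonormal family
    have hexp : ∀ i, (B ^ s) (e i) = ∑ l, c l i • e l := by
      intro i
      obtain ⟨d, hd⟩ := (Submodule.mem_span_range_iff_exists_fun ℂ).mp (hmem s i)
      have hcl : ∀ l, c l i = d l := by
        intro l
        rw [hc]
        dsimp only
        rw [← hd, he.inner_right_fintype]
      rw [← hd]
      exact Finset.sum_congr rfl fun l _ => by rw [hcl l]
    -- the row vectors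
    set w : Fin k → H := fun l => ∑ i, (starRingEnd ℂ (c l i)) • e i with hw
    have hwnorm : ∀ l, ‖w l‖ ≤ 1 := by
      intro l
      have hb := functional_bessel' he ((innerSL ℂ (e l)).comp (B ^ s))
      have hfn : ‖(innerSL ℂ (e l)).comp (B ^ s)‖ ≤ 1 := by
        calc ‖(innerSL ℂ (e l)).comp (B ^ s)‖ ≤ ‖innerSL ℂ (e l)‖ * ‖B ^ s‖ :=
              ContinuousLinearMap.opNorm_comp_le _ _
          _ ≤ 1 * 1 := by
              refine mul_le_mul ?_ (hpow B hB s) (norm_nonneg _) zero_le_one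
              rw [innerSL_apply_norm, he.1 l]
          _ = 1 := one_mul 1
      have hwsq : ‖w l‖ ^ 2 = ∑ i, ‖c l i‖ ^ 2 := by
        rw [hw]
        dsimp only
        rw [on_norm_sq' he]
        simp
      have hsum : ∑ i, ‖c l i‖ ^ 2 ≤ 1 := by
        refine le_trans (le_of_eq ?_) (hb.trans ?_)
        · exact Finset.sum_congr rfl fun i _ => by rw [hc]; rfl
        · nlinarith [norm_nonneg ((innerSL ℂ (e l)).comp (B ^ s))]
      nlinarith [norm_nonneg (w l)]
    -- swap the sums
    have hswap : ∑ i, ⟪e i, (A ^ m) ((A - B) ((B ^ s) (e i)))⟫_ℂ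
        = ∑ l, ⟪w l, (A ^ m) ((A - B) (e l))⟫_ℂ := by
      calc ∑ i, ⟪e i, (A ^ m) ((A - B) ((B ^ s) (e i)))⟫_ℂ
          = ∑ i, ∑ l, c l i * ⟪e i, (A ^ m) ((A - B) (e l))⟫_ℂ := by
            refine Finset.sum_congr rfl fun i _ => ?_
            have h2 : (A ^ m) ((A - B) ((B ^ s) (e i))) = ∑ l, c l i • (A ^ m) ((A - B) (e l)) := by
              rw [hexp i, map_sum, map_sum]
              exact Finset.sum_congr rfl fun l _ => by rw [map_smul, map_smul]
            rw [h2, inner_sum]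
            exact Finset.sum_congr rfl fun l _ => by rw [inner_smul_right]
        _ = ∑ l, ∑ i, c l i * ⟪e i, (A ^ m) ((A - B) (e l))⟫_ℂ := Finset.sum_comm
        _ = ∑ l, ⟪w l, (A ^ m) ((A - B) (e l))⟫_ℂ := by
            refine Finset.sum_congr rfl fun l _ => ?_
            rw [hw]
            dsimp only
            rw [sum_inner]
            exact Finset.sum_congr rfl fun i _ => by rw [inner_smul_left, Complex.conj_conj]
    rw [hswap]
    calc ‖∑ l, ⟪w l, (A ^ m) ((A - B) (e l))⟫_ℂ‖
        ≤ ∑ l, ‖⟪w l, (A ^ m) ((A - B) (e l))⟫_ℂ‖ := norm_sum_le _ _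
      _ ≤ ∑ l, ‖(A - B) (e l)‖ := by
          refine Finset.sum_le_sum fun l _ => ?_
          have h1 := norm_inner_le_norm (𝕜 := ℂ) (w l) ((A ^ m) ((A - B) (e l)))
          have h3 : ‖(A ^ m) ((A - B) (e l))‖ ≤ ‖(A - B) (e l)‖ := by
            calc ‖(A ^ m) ((A - B) (e l))‖ ≤ ‖A ^ m‖ * ‖(A - B) (e l)‖ :=
                  (A ^ m).le_opNorm _
              _ ≤ 1 * ‖(A - B) (e l)‖ := by
                  exact mul_le_mul_of_nonneg_right (hpow A hA m) (norm_nonneg _)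
              _ = ‖(A - B) (e l)‖ := one_mul _
          calc ‖⟪w l, (A ^ m) ((A - B) (e l))⟫_ℂ‖
              ≤ ‖w l‖ * ‖(A ^ m) ((A - B) (e l))‖ := h1
            _ ≤ 1 * ‖(A - B) (e l)‖ :=
                mul_le_mul (hwnorm l) h3 (norm_nonneg _) zero_le_one
            _ = ‖(A - B) (e l)‖ := one_mul _
  calc ‖∑ m ∈ Finset.range j, ∑ i, ⟪e i, (A ^ m) ((A - B) ((B ^ (j - 1 - m)) (e i)))⟫_ℂ‖
      ≤ ∑ m ∈ Finset.range j, ‖∑ i, ⟪e i, (A ^ m) ((A - B) ((B ^ (j - 1 - m)) (e i)))⟫_ℂ‖ :=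
        norm_sum_le _ _
    _ ≤ ∑ _m ∈ Finset.range j, ∑ l, ‖(A - B) (e l)‖ := Finset.sum_le_sum keym
    _ = (j : ℝ) * ∑ i, ‖(A - B) (e i)‖ := by
        rw [Finset.sum_const, Finset.card_range, nsmul_eq_mul]
end
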